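/- For integers k ≥ 1, l ≥ 2 and d ≥ 1, the algebraic connectivity satisfies α(T(k,l,d)) > α(T(k,l−1,d+1)). -/

import Mathlib

/-- The algebraic connectivity of a graph: the second smallest Laplacian eigenvalue,
realized as the minimum of the Rayleigh quotient over unit vectors orthogonal to the
all-ones vector. -/
noncomputable def algConn {V : Type*} [Fintype V] [DecidableEq V] (G : SimpleGraph V) : ℝ :=
  letI := Classical.decRel G.Adj
  sInf { r : ℝ | ∃ x : V → ℝ, (∑ v, x v) = 0 ∧ (∑ v, (x v) ^ 2) = 1 ∧
      r = dotProduct x ((G.lapMatrix ℝ).mulVec x) }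

/-- A Fiedler vector: an eigenvector of the Laplacian matrix for the eigenvalue `algConn G`. -/
noncomputable def IsFiedlerVector {V : Type*} [Fintype V] [DecidableEq V]
    (G : SimpleGraph V) (x : V → ℝ) : Prop :=
  letI := Classical.decRel G.Adj
  x ≠ 0 ∧ (G.lapMatrix ℝ).mulVec x = algConn G • x

/-- The domination number: the minimum size of a set `S` of vertices such that every
vertex outside `S` has a neighbor in `S`. -/
noncomputable def dominationNumber {V : Type*} [Fintype V] (G : SimpleGraph V) : ℕ :=
  sInf { k : ℕ | ∃ S : Finset V, S.card = k ∧ ∀ v ∉ S, ∃ u ∈ S, G.Adj u v }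

/-- The tree `T(k,l,d)`: a path on `d` vertices `0, …, d-1` with `k` pendant vertices
attached at vertex `0` and `l` pendant vertices attached at vertex `d-1`. -/
def Tkld (k l d : ℕ) : SimpleGraph (Fin k ⊕ Fin d ⊕ Fin l) where
  Adj a b :=
    match a, b with
    | Sum.inl _, Sum.inr (Sum.inl j) => j.1 = 0
    | Sum.inr (Sum.inl j), Sum.inl _ => j.1 = 0
    | Sum.inr (Sum.inl i), Sum.inr (Sum.inl j) => i.1 + 1 = j.1 ∨ j.1 + 1 = i.1
    | Sum.inr (Sum.inl j), Sum.inr (Sum.inr _) => j.1 + 1 = d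
    | Sum.inr (Sum.inr _), Sum.inr (Sum.inl j) => j.1 + 1 = d
    | _, _ => False
  symm := by
    constructor
    rintro (a | b | c) (a' | b' | c') h <;> simp_all <;> tauto
  loopless := by
    constructor
    rintro (a | b | c) h <;> simp_all

/-- The coalescence `G₁(v) ◇ G₂(u)`: identify the vertex `v` of `G₁` with the vertex `u`
of `G₂` (the identified vertex is represented by `Sum.inl v`). -/
def coalesce {V₁ V₂ : Type*} (G₁ : SimpleGraph V₁) (G₂ : SimpleGraph V₂)
    (v : V₁) (u : V₂) : SimpleGraph (V₁ ⊕ {w : V₂ // w ≠ u}) where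
  Adj a b :=
    match a, b with
    | Sum.inl a, Sum.inl b => G₁.Adj a b
    | Sum.inl a, Sum.inr b => a = v ∧ G₂.Adj u b.1
    | Sum.inr a, Sum.inl b => b = v ∧ G₂.Adj u a.1
    | Sum.inr a, Sum.inr b => G₂.Adj a.1 b.1
  symm := by
    constructor
    rintro (a | a) (b | b) h <;> simp_all [SimpleGraph.adj_comm]
  loopless := by
    constructor
    rintro (a | a) h <;> simp_all



open Finset Matrix SimpleGraph

section General
variable {V : Type*} [Fintype V] [DecidableEq V]

lemma quadform_nonneg (G : SimpleGraph V) [DecidableRel G.Adj] (x : V → ℝ) :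
    0 ≤ x ⬝ᵥ (G.lapMatrix ℝ *ᵥ x) := by
  rw [← Matrix.toLinearMap₂'_apply', lapMatrix_toLinearMap₂']
  positivity

lemma quadform_symm (G : SimpleGraph V) [DecidableRel G.Adj] (x y : V → ℝ) :
    x ⬝ᵥ (G.lapMatrix ℝ *ᵥ y) = y ⬝ᵥ (G.lapMatrix ℝ *ᵥ x) := by
  rw [Matrix.dotProduct_mulVec, ← Matrix.mulVec_transpose, (G.isSymm_lapMatrix (R := ℝ)).eq,
    dotProduct_comm]

lemma algConn_bddBelow (G : SimpleGraph V) [inst : DecidableRel G.Adj] :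
    0 ∈ lowerBounds { r : ℝ | ∃ x : V → ℝ, (∑ v, x v) = 0 ∧ (∑ v, (x v) ^ 2) = 1 ∧
      r = dotProduct x ((G.lapMatrix ℝ).mulVec x) } := by
  rintro r ⟨x, -, -, rfl⟩
  exact quadform_nonneg G x

lemma algConn_le_rayleigh (G : SimpleGraph V) [inst : DecidableRel G.Adj] (y : V → ℝ)
    (h0 : ∑ v, y v = 0) :
    algConn G * (∑ v, (y v) ^ 2) ≤ y ⬝ᵥ (G.lapMatrix ℝ *ᵥ y) := by
  obtain rfl : inst = Classical.decRel G.Adj := Subsingleton.elim _ _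
  letI := Classical.decRel G.Adj
  by_cases hz : (∑ v, (y v) ^ 2) = 0
  · have hy : y = 0 := by
      funext v
      have h1 : (y v) ^ 2 = 0 := by
        have := (Finset.sum_eq_zero_iff_of_nonneg (by intro i _; positivity)).1 hz v (mem_univ v)
        simpa using this
      simpa using pow_eq_zero_iff (n := 2) (by norm_num) |>.1 h1
    simp [hy, hz]
  · have hpos : 0 < ∑ v, (y v) ^ 2 :=
      lt_of_le_of_ne (Finset.sum_nonneg fun i _ => by positivity) (Ne.symm hz)
    set m := ∑ v, (y v) ^ 2 with hm
    set s := (Real.sqrt m)⁻¹ with hs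
    have hsm : Real.sqrt m > 0 := Real.sqrt_pos.2 hpos
    have hs2 : s ^ 2 * m = 1 := by
      rw [hs, inv_pow, Real.sq_sqrt hpos.le]
      exact inv_mul_cancel₀ hz
    have hmem : s ^ 2 * (y ⬝ᵥ (G.lapMatrix ℝ *ᵥ y)) ∈
        { r : ℝ | ∃ x : V → ℝ, (∑ v, x v) = 0 ∧ (∑ v, (x v) ^ 2) = 1 ∧
          r = dotProduct x ((G.lapMatrix ℝ).mulVec x) } := by
      refine ⟨s • y, ?_, ?_, ?_⟩
      · simp [← Finset.mul_sum, h0]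
      · calc (∑ v, ((s • y) v) ^ 2) = s ^ 2 * m := by
              simp [hm, Finset.mul_sum, mul_pow]
          _ = 1 := hs2
      · show s ^ 2 * _ = dotProduct _ _
        rw [Matrix.mulVec_smul]
        simp [smul_eq_mul, dotProduct_smul, Finset.mul_sum, dotProduct]
        ring_nf
    have hle : algConn G ≤ s ^ 2 * (y ⬝ᵥ (G.lapMatrix ℝ *ᵥ y)) := by
      apply csInf_le ⟨0, algConn_bddBelow G⟩ hmem
    have hs2' : s ^ 2 = m⁻¹ := by
      field_simp at hs2 ⊢
      linarith [hs2]
    rw [hs2'] at hle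
    calc algConn G * m ≤ (m⁻¹ * (y ⬝ᵥ (G.lapMatrix ℝ *ᵥ y))) * m :=
          mul_le_mul_of_nonneg_right hle hpos.le
      _ = y ⬝ᵥ (G.lapMatrix ℝ *ᵥ y) := by field_simp

lemma exists_fiedler (G : SimpleGraph V) [inst : DecidableRel G.Adj] (x₀ : V → ℝ)
    (h00 : ∑ v, x₀ v = 0) (h01 : ∑ v, (x₀ v) ^ 2 = 1) :
    ∃ x : V → ℝ, (∑ v, x v) = 0 ∧ (∑ v, (x v) ^ 2) = 1 ∧
      x ⬝ᵥ (G.lapMatrix ℝ *ᵥ x) = algConn G := by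
  obtain rfl : inst = Classical.decRel G.Adj := Subsingleton.elim _ _
  letI := Classical.decRel G.Adj
  set K : Set (V → ℝ) := {x | (∑ v, x v) = 0 ∧ (∑ v, (x v) ^ 2) = 1} with hK
  set f : (V → ℝ) → ℝ := fun x => x ⬝ᵥ (G.lapMatrix ℝ *ᵥ x) with hf
  have hcont1 : Continuous fun x : V → ℝ => ∑ v, x v :=
    continuous_finset_sum _ fun i _ => continuous_apply i
  have hcont2 : Continuous fun x : V → ℝ => ∑ v, (x v) ^ 2 :=
    continuous_finset_sum _ fun i _ => (continuous_apply i).pow 2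
  have hcontf : Continuous f := by
    unfold f
    unfold dotProduct Matrix.mulVec
    refine continuous_finset_sum _ fun i _ => (continuous_apply i).mul ?_
    exact continuous_finset_sum _ fun j _ => continuous_const.mul (continuous_apply j)
  have hKclosed : IsClosed K := by
    have := (isClosed_singleton (x := (0:ℝ))).preimage hcont1
    have h2 := (isClosed_singleton (x := (1:ℝ))).preimage hcont2
    exact IsClosed.inter this h2
  have hKsub : K ⊆ Metric.closedBall 0 1 := by
    intro x hx
    rw [Metric.mem_closedBall, dist_zero_right]
    rw [pi_norm_le_iff_of_nonneg zero_le_one]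
    intro v
    rw [Real.norm_eq_abs, ← Real.sqrt_one, ← Real.sqrt_sq_eq_abs]
    apply Real.sqrt_le_sqrt
    calc (x v)^2 ≤ ∑ u, (x u)^2 :=
        Finset.single_le_sum (f := fun u => (x u)^2) (fun i _ => by positivity) (mem_univ v)
      _ = 1 := hx.2
  have hKcompact : IsCompact K :=
    IsCompact.of_isClosed_subset (isCompact_closedBall 0 1) hKclosed hKsub
  have hKne : K.Nonempty := ⟨x₀, h00, h01⟩
  have hScompact : IsCompact (f '' K) := hKcompact.image hcontf
  have hSne : (f '' K).Nonempty := hKne.image f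
  have hmem := hScompact.sInf_mem hSne
  obtain ⟨x, hxK, hxf⟩ := hmem
  refine ⟨x, hxK.1, hxK.2, ?_⟩
  have : x ⬝ᵥ (G.lapMatrix ℝ *ᵥ x) = f x := rfl
  rw [this, hxf]
  unfold algConn
  congr 1
  ext r
  constructor
  · rintro ⟨x, hx1, hx2⟩
    exact ⟨x, hx1.1, hx1.2, hx2.symm⟩
  · rintro ⟨x, hx1, hx2, hx3⟩
    exact ⟨x, ⟨hx1, hx2⟩, hx3.symm⟩

lemma fiedler_eig (G : SimpleGraph V) [inst : DecidableRel G.Adj] (x : V → ℝ)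
    (h0 : ∑ v, x v = 0) (h1 : ∑ v, (x v) ^ 2 = 1)
    (hx : x ⬝ᵥ (G.lapMatrix ℝ *ᵥ x) = algConn G) :
    G.lapMatrix ℝ *ᵥ x = algConn G • x := by
  set lam := algConn G with hlam
  set L := G.lapMatrix ℝ with hL
  have key : ∀ z : V → ℝ, (∑ v, z v) = 0 → z ⬝ᵥ (L *ᵥ x) - lam * (z ⬝ᵥ x) = 0 := by
    intro z hz
    set B := z ⬝ᵥ (L *ᵥ x) - lam * (z ⬝ᵥ x) with hB
    set C := z ⬝ᵥ (L *ᵥ z) - lam * (z ⬝ᵥ z) with hC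
    have hq : ∀ t : ℝ, 0 ≤ 2 * B * t + C * t ^ 2 := by
      intro t
      have hsum : (∑ v, (x v + t * z v)) = 0 := by
        rw [Finset.sum_add_distrib, h0, ← Finset.mul_sum, hz]; ring
      have h := algConn_le_rayleigh G (fun v => x v + t * z v) hsum
      have hexp1 : (fun v => x v + t * z v) ⬝ᵥ (L *ᵥ (fun v => x v + t * z v)) =
          x ⬝ᵥ (L *ᵥ x) + 2 * t * (z ⬝ᵥ (L *ᵥ x)) + t ^ 2 * (z ⬝ᵥ (L *ᵥ z)) := by
        have : (fun v => x v + t * z v) = x + t • z := by funext v; simp [smul_eq_mul]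
        rw [this]
        rw [Matrix.mulVec_add, Matrix.mulVec_smul, add_dotProduct,
          smul_dotProduct, dotProduct_add, dotProduct_add,
          dotProduct_smul, dotProduct_smul]
        rw [quadform_symm G x z]
        simp [smul_eq_mul]; ring
      have hexp2 : (∑ v, (x v + t * z v) ^ 2) =
          1 + 2 * t * (z ⬝ᵥ x) + t ^ 2 * (z ⬝ᵥ z) := by
        have hzx : z ⬝ᵥ x = ∑ v, z v * x v := rfl
        have hzz : z ⬝ᵥ z = ∑ v, z v * z v := rfl
        rw [hzx, hzz, ← h1]
        rw [Finset.mul_sum, Finset.mul_sum, ← Finset.sum_add_distrib, ← Finset.sum_add_distrib]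
        apply Finset.sum_congr rfl
        intro v _
        ring
      rw [hexp1, hexp2, hx] at h
      rw [hB, hC]
      nlinarith [h]
    by_contra hBne
    have hBpos : 0 < B ^ 2 := by positivity
    have hCabs : C ≤ |C| := le_abs_self C
    have habs : (0:ℝ) < |C| + 1 := by positivity
    have h3 : 2 * B * (-B / (|C| + 1)) + C * (-B / (|C| + 1)) ^ 2
        = (-2 * B ^ 2 * (|C| + 1) + C * B ^ 2) / (|C| + 1) ^ 2 := by
      field_simp
    have ht := hq (-B / (|C| + 1))
    rw [h3] at ht
    have hD : (0:ℝ) < (|C| + 1) ^ 2 := by positivity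
    have key2 : 0 ≤ -2 * B ^ 2 * (|C| + 1) + C * B ^ 2 := by
      have := mul_nonneg ht hD.le
      rwa [div_mul_cancel₀ _ (ne_of_gt hD)] at this
    nlinarith [key2, hBpos, hCabs, mul_nonneg hBpos.le (abs_nonneg C)]
  -- now take z := L *ᵥ x - lam • x
  set w : V → ℝ := fun v => (L *ᵥ x) v - lam * x v with hw
  have hsumLx : (∑ v, (L *ᵥ x) v) = 0 := by
    have h1' : (fun _ : V => (1:ℝ)) ⬝ᵥ (L *ᵥ x) = ∑ v, (L *ᵥ x) v := by
      simp [dotProduct]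
    rw [← h1', hL, quadform_symm G (fun _ => 1) x, G.lapMatrix_mulVec_const_eq_zero]
    simp
  have hsumw : (∑ v, w v) = 0 := by
    rw [hw]
    simp only [Finset.sum_sub_distrib, hsumLx, ← Finset.mul_sum, h0]
    ring
  have hkey := key w hsumw
  have hww : w ⬝ᵥ (L *ᵥ x) - lam * (w ⬝ᵥ x) = ∑ v, (w v) ^ 2 := by
    simp only [dotProduct, ← Finset.mul_sum, Finset.mul_sum]
    rw [← Finset.sum_sub_distrib]
    apply Finset.sum_congr rfl
    intro v _
    rw [hw]
    ring
  rw [hww] at hkey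
  have hwzero : ∀ v, w v = 0 := by
    intro v
    have := (Finset.sum_eq_zero_iff_of_nonneg (fun i _ => by positivity)).1 hkey v (mem_univ v)
    simpa [pow_eq_zero_iff] using this
  funext v
  have h5 : (L *ᵥ x) v - lam * x v = 0 := hwzero v
  simp only [Pi.smul_apply, smul_eq_mul]
  linarith [h5]

end General

lemma sum_ite_fin {n : ℕ} (P : ℕ → Prop) [DecidablePred P] (f : Fin n → ℝ) (m : ℕ)
    (hP : ∀ j, j < n → (P j ↔ j = m)) :
    (∑ j : Fin n, if P j.1 then f j else 0) = if h : m < n then f ⟨m, h⟩ else 0 := by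
  split
  · next h =>
    rw [Finset.sum_eq_single ⟨m, h⟩]
    · rw [if_pos ((hP m h).2 rfl)]
    · intro j _ hj
      rw [if_neg]
      intro hPj
      exact hj (Fin.ext ((hP j.1 j.2).1 hPj))
    · intro hm; exact absurd (mem_univ _) hm
  · next h =>
    apply Finset.sum_eq_zero
    intro j _
    rw [if_neg]
    intro hPj
    have := (hP j.1 j.2).1 hPj
    omega

lemma sum_ite_fin_zero {n : ℕ} (P : ℕ → Prop) [DecidablePred P] (f : Fin n → ℝ)
    (hP : ∀ j, j < n → ¬ P j) :
    (∑ j : Fin n, if P j.1 then f j else 0) = 0 :=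
  Finset.sum_eq_zero fun j _ => if_neg (hP j.1 j.2)

lemma lap_apply {V : Type*} [Fintype V] [DecidableEq V] (G : SimpleGraph V)
    [DecidableRel G.Adj] (x : V → ℝ) (v : V) :
    (G.lapMatrix ℝ *ᵥ x) v = ∑ u, if G.Adj v u then x v - x u else 0 := by
  rw [lapMatrix_mulVec_apply, G.degree_eq_sum_if_adj (R := ℝ) v, neighborFinset_eq_filter,
    Finset.sum_filter, Finset.sum_mul]
  rw [← Finset.sum_sub_distrib]
  apply Finset.sum_congr rfl
  intro u _
  by_cases h : G.Adj v u <;> simp [h]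

section TkldLemmas
variable {k l d : ℕ} [inst : DecidableRel (Tkld k l d).Adj] (x : Fin k ⊕ Fin d ⊕ Fin l → ℝ)

-- adjacency facts (definitional)
lemma adjT_ll (u u' : Fin k) : ¬ (Tkld k l d).Adj (Sum.inl u) (Sum.inl u') := fun h => h.elim
lemma adjT_lr (u : Fin k) (u' : Fin l) :
    ¬ (Tkld k l d).Adj (Sum.inl u) (Sum.inr (Sum.inr u')) := fun h => h.elim
lemma adjT_lp (u : Fin k) (j : Fin d) :
    (Tkld k l d).Adj (Sum.inl u) (Sum.inr (Sum.inl j)) ↔ j.1 = 0 := Iff.rfl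
lemma adjT_pl (u : Fin k) (j : Fin d) :
    (Tkld k l d).Adj (Sum.inr (Sum.inl j)) (Sum.inl u) ↔ j.1 = 0 := Iff.rfl
lemma adjT_pp (i j : Fin d) :
    (Tkld k l d).Adj (Sum.inr (Sum.inl i)) (Sum.inr (Sum.inl j)) ↔
      i.1 + 1 = j.1 ∨ j.1 + 1 = i.1 := Iff.rfl
lemma adjT_pr (u : Fin l) (j : Fin d) :
    (Tkld k l d).Adj (Sum.inr (Sum.inl j)) (Sum.inr (Sum.inr u)) ↔ j.1 + 1 = d := Iff.rfl
lemma adjT_rp (u : Fin l) (j : Fin d) :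
    (Tkld k l d).Adj (Sum.inr (Sum.inr u)) (Sum.inr (Sum.inl j)) ↔ j.1 + 1 = d := Iff.rfl
lemma adjT_rl (u : Fin l) (u' : Fin k) :
    ¬ (Tkld k l d).Adj (Sum.inr (Sum.inr u)) (Sum.inl u') := fun h => h.elim
lemma adjT_rr (u u' : Fin l) :
    ¬ (Tkld k l d).Adj (Sum.inr (Sum.inr u)) (Sum.inr (Sum.inr u')) := fun h => h.elim

lemma lapT_left (hd : 0 < d) (u : Fin k) :
    ((Tkld k l d).lapMatrix ℝ *ᵥ x) (Sum.inl u)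
      = x (Sum.inl u) - x (Sum.inr (Sum.inl ⟨0, hd⟩)) := by
  rw [lap_apply, Fintype.sum_sum_type, Fintype.sum_sum_type]
  rw [Finset.sum_eq_zero (fun j _ => if_neg (adjT_ll u j)),
    Finset.sum_eq_zero (fun j _ => if_neg (adjT_lr u j))]
  have h2 : (∑ j : Fin d, if (Tkld k l d).Adj (Sum.inl u) (Sum.inr (Sum.inl j))
        then x (Sum.inl u) - x (Sum.inr (Sum.inl j)) else 0)
      = ∑ j : Fin d, if j.1 = 0 then x (Sum.inl u) - x (Sum.inr (Sum.inl j)) else 0 :=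
    Finset.sum_congr rfl fun j _ => if_congr (adjT_lp u j) rfl rfl
  rw [h2, sum_ite_fin (fun j => j = 0) _ 0 (fun j _ => Iff.rfl), dif_pos (show 0 < d by omega)]
  ring

lemma lapT_right (hd : 0 < d) (u : Fin l) :
    ((Tkld k l d).lapMatrix ℝ *ᵥ x) (Sum.inr (Sum.inr u))
      = x (Sum.inr (Sum.inr u)) - x (Sum.inr (Sum.inl ⟨d - 1, by omega⟩)) := by
  rw [lap_apply, Fintype.sum_sum_type, Fintype.sum_sum_type]
  rw [Finset.sum_eq_zero (fun j _ => if_neg (adjT_rl u j)),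
    Finset.sum_eq_zero (fun j _ => if_neg (adjT_rr u j))]
  have h2 : (∑ j : Fin d, if (Tkld k l d).Adj (Sum.inr (Sum.inr u)) (Sum.inr (Sum.inl j))
        then x (Sum.inr (Sum.inr u)) - x (Sum.inr (Sum.inl j)) else 0)
      = ∑ j : Fin d, if j.1 + 1 = d then x (Sum.inr (Sum.inr u)) - x (Sum.inr (Sum.inl j)) else 0 :=
    Finset.sum_congr rfl fun j _ => if_congr (adjT_rp u j) rfl rfl
  rw [h2, sum_ite_fin (fun j => j + 1 = d) _ (d - 1) (fun j hj => by omega),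
    dif_pos (show d - 1 < d by omega)]
  ring

lemma lapT_path (i : Fin d) :
    ((Tkld k l d).lapMatrix ℝ *ᵥ x) (Sum.inr (Sum.inl i)) =
      (if _ : i.1 = 0 then ∑ u : Fin k, (x (Sum.inr (Sum.inl i)) - x (Sum.inl u))
        else x (Sum.inr (Sum.inl i)) - x (Sum.inr (Sum.inl ⟨i.1 - 1, by omega⟩)))
      + (if _ : i.1 + 1 = d then ∑ u : Fin l, (x (Sum.inr (Sum.inl i)) - x (Sum.inr (Sum.inr u)))
        else x (Sum.inr (Sum.inl i)) - x (Sum.inr (Sum.inl ⟨i.1 + 1, by omega⟩))) := by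
  rw [lap_apply, Fintype.sum_sum_type, Fintype.sum_sum_type]
  have h1 : (∑ u : Fin k, if (Tkld k l d).Adj (Sum.inr (Sum.inl i)) (Sum.inl u)
        then x (Sum.inr (Sum.inl i)) - x (Sum.inl u) else 0)
      = if i.1 = 0 then ∑ u : Fin k, (x (Sum.inr (Sum.inl i)) - x (Sum.inl u)) else 0 := by
    by_cases h0 : i.1 = 0
    · rw [if_pos h0]
      exact Finset.sum_congr rfl fun u _ => if_pos ((adjT_pl u i).2 h0)
    · rw [if_neg h0]
      exact Finset.sum_eq_zero fun u _ => if_neg (fun h => h0 ((adjT_pl u i).1 h))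
  have h3 : (∑ u : Fin l, if (Tkld k l d).Adj (Sum.inr (Sum.inl i)) (Sum.inr (Sum.inr u))
        then x (Sum.inr (Sum.inl i)) - x (Sum.inr (Sum.inr u)) else 0)
      = if i.1 + 1 = d then ∑ u : Fin l, (x (Sum.inr (Sum.inl i)) - x (Sum.inr (Sum.inr u)))
        else 0 := by
    by_cases hdd : i.1 + 1 = d
    · rw [if_pos hdd]
      exact Finset.sum_congr rfl fun u _ => if_pos ((adjT_pr u i).2 hdd)
    · rw [if_neg hdd]
      exact Finset.sum_eq_zero fun u _ => if_neg (fun h => hdd ((adjT_pr u i).1 h))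
  have h2 : (∑ j : Fin d, if (Tkld k l d).Adj (Sum.inr (Sum.inl i)) (Sum.inr (Sum.inl j))
        then x (Sum.inr (Sum.inl i)) - x (Sum.inr (Sum.inl j)) else 0)
      = (∑ j : Fin d, if i.1 + 1 = j.1
          then x (Sum.inr (Sum.inl i)) - x (Sum.inr (Sum.inl j)) else 0)
        + (∑ j : Fin d, if j.1 + 1 = i.1
          then x (Sum.inr (Sum.inl i)) - x (Sum.inr (Sum.inl j)) else 0) := by
    rw [← Finset.sum_add_distrib]
    refine Finset.sum_congr rfl fun j _ => ?_
    by_cases ha : i.1 + 1 = j.1 <;> by_cases hb : j.1 + 1 = i.1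
    · omega
    · rw [if_pos ((adjT_pp i j).2 (Or.inl ha)), if_pos ha, if_neg hb]; ring
    · rw [if_pos ((adjT_pp i j).2 (Or.inr hb)), if_neg ha, if_pos hb]; ring
    · rw [if_neg (fun h => ((adjT_pp i j).1 h).elim ha hb), if_neg ha, if_neg hb]; ring
  rw [h1, h2, h3]
  rw [sum_ite_fin (fun j => i.1 + 1 = j) _ (i.1 + 1) (fun j hj => by omega)]
  by_cases h0 : i.1 = 0
  · rw [if_pos h0, dif_pos h0,
      sum_ite_fin_zero (fun j => j + 1 = i.1) _ (fun j hj => by omega)]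
    by_cases hdd : i.1 + 1 = d
    · rw [if_pos hdd, dif_pos hdd, dif_neg (by omega : ¬ i.1 + 1 < d)]
      ring
    · rw [if_neg hdd, dif_neg hdd, dif_pos (by omega : i.1 + 1 < d)]
      ring
  · rw [if_neg h0, dif_neg h0,
      sum_ite_fin (fun j => j + 1 = i.1) _ (i.1 - 1) (fun j hj => by omega),
      dif_pos (show i.1 - 1 < d by omega)]
    by_cases hdd : i.1 + 1 = d
    · rw [if_pos hdd, dif_pos hdd, dif_neg (by omega : ¬ i.1 + 1 < d)]
      ring
    · rw [if_neg hdd, dif_neg hdd, dif_pos (by omega : i.1 + 1 < d)]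
      ring

end TkldLemmas

section Propagate
variable {k l d : ℕ} [inst : DecidableRel (Tkld k l d).Adj] {x : Fin k ⊕ Fin d ⊕ Fin l → ℝ}
  {lam : ℝ}

lemma xeq (x : Fin k ⊕ Fin d ⊕ Fin l → ℝ) {a b : ℕ} (ha : a < d) (hb : b < d) (h : a = b) :
    x (Sum.inr (Sum.inl ⟨a, ha⟩)) = x (Sum.inr (Sum.inl ⟨b, hb⟩)) := by subst h; rfl

omit inst in
lemma zero_propagate [inst : DecidableRel (Tkld k l d).Adj] (hd : 0 < d)
    (heig : (Tkld k l d).lapMatrix ℝ *ᵥ x = lam • x) (hlam : lam ≠ 1)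
    (hc : x (Sum.inr (Sum.inl ⟨d - 1, by omega⟩)) = 0) :
    ∀ v, x v = 0 := by
  have heq : ∀ v, ((Tkld k l d).lapMatrix ℝ *ᵥ x) v = lam * x v := fun v => by
    rw [heig]; rfl
  have hR : ∀ u : Fin l, x (Sum.inr (Sum.inr u)) = 0 := by
    intro u
    have h := heq (Sum.inr (Sum.inr u))
    rw [lapT_right x hd u, hc, sub_zero] at h
    have h2 : (lam - 1) * x (Sum.inr (Sum.inr u)) = 0 := by linarith
    rcases mul_eq_zero.1 h2 with h' | h'
    · exact absurd (by linarith : lam = 1) hlam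
    · exact h'
  have hP : ∀ m : ℕ, ∀ _ : m < d, x (Sum.inr (Sum.inl ⟨d - 1 - m, by omega⟩)) = 0 := by
    intro m
    induction m using Nat.strong_induction_on with
    | _ m ih =>
      intro hm
      by_cases hm0 : m = 0
      · subst hm0; exact hc
      by_cases hm1 : m = 1
      · subst hm1
        have hd2 : 2 ≤ d := by omega
        have h := heq (Sum.inr (Sum.inl ⟨d - 1, by omega⟩))
        rw [lapT_path x ⟨d - 1, by omega⟩] at h
        rw [dif_neg (by omega : ¬ (d - 1 = 0)), dif_pos (by omega : d - 1 + 1 = d)] at h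
        rw [hc] at h
        rw [Finset.sum_congr rfl (fun u _ => by rw [hR u, sub_zero])] at h
        simp only [Finset.sum_const, card_univ, Fintype.card_fin, nsmul_eq_mul,
          mul_zero, zero_sub] at h
        have hz : x (Sum.inr (Sum.inl ⟨d - 1 - 1, by omega⟩)) = 0 := by linarith
        exact hz
      · -- m ≥ 2
        have hm2 : 2 ≤ m := by omega
        have hi1 : d - m < d := by omega
        have h := heq (Sum.inr (Sum.inl ⟨d - m, hi1⟩))
        rw [lapT_path x ⟨d - m, hi1⟩] at h
        rw [dif_neg (by omega : ¬ (d - m = 0)), dif_neg (by omega : ¬ (d - m + 1 = d))] at h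
        have hcur : x (Sum.inr (Sum.inl ⟨d - m, hi1⟩)) = 0 :=
          (xeq x hi1 (by omega) (by omega)).trans (ih (m - 1) (by omega) (by omega))
        have hnxt : x (Sum.inr (Sum.inl ⟨d - m + 1, by omega⟩)) = 0 :=
          (xeq x (by omega) (by omega) (by omega)).trans (ih (m - 2) (by omega) (by omega))
        rw [hcur, hnxt] at h
        have hz : x (Sum.inr (Sum.inl ⟨d - m - 1, by omega⟩)) = 0 := by
          simp only [mul_zero, zero_sub, sub_zero, zero_add] at h
          linarith
        exact (xeq x (by omega) (by omega) (by omega)).trans hz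
  have hP0 : x (Sum.inr (Sum.inl ⟨0, hd⟩)) = 0 :=
    (xeq x hd (by omega) (by omega)).trans (hP (d - 1) (by omega))
  have hL : ∀ u : Fin k, x (Sum.inl u) = 0 := by
    intro u
    have h := heq (Sum.inl u)
    rw [lapT_left x hd u, hP0, sub_zero] at h
    have h2 : (lam - 1) * x (Sum.inl u) = 0 := by linarith
    rcases mul_eq_zero.1 h2 with h' | h'
    · exact absurd (by linarith : lam = 1) hlam
    · exact h'
  rintro (u | i | u)
  · exact hL u
  · exact (xeq x i.2 (by omega) (by omega)).trans (hP (d - 1 - i.1) (by omega))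
  · exact hR u

omit inst in
lemma const_contradiction [inst : DecidableRel (Tkld k l d).Adj] (hd : 0 < d)
    (hadj : ∀ v w, (Tkld k l d).Adj v w → x v = x w)
    (h0 : ∑ v, x v = 0) (h1 : ∑ v, (x v) ^ 2 = 1) : False := by
  set a := x (Sum.inr (Sum.inl ⟨0, hd⟩)) with ha
  have hPc : ∀ m : ℕ, ∀ hm : m < d, x (Sum.inr (Sum.inl ⟨m, hm⟩)) = a := by
    intro m
    induction m with
    | zero => intro hm; rfl
    | succ n ihn =>
      intro hm
      have hadj' : (Tkld k l d).Adj (Sum.inr (Sum.inl ⟨n, by omega⟩))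
          (Sum.inr (Sum.inl ⟨n + 1, hm⟩)) := (adjT_pp _ _).2 (Or.inl rfl)
      rw [← hadj _ _ hadj', ihn (by omega)]
  have hLc : ∀ u : Fin k, x (Sum.inl u) = a :=
    fun u => hadj _ _ ((adjT_lp u ⟨0, hd⟩).2 rfl)
  have hRc : ∀ u : Fin l, x (Sum.inr (Sum.inr u)) = a := by
    intro u
    rw [← hPc (d - 1) (by omega)]
    exact hadj _ _ ((adjT_rp u ⟨d - 1, by omega⟩).2 (show d - 1 + 1 = d by omega))
  have hall : ∀ v, x v = a := by
    rintro (u | i | u)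
    · exact hLc u
    · rw [← hPc i.1 i.2]
    · exact hRc u
  have hcard : (0:ℝ) < (k : ℝ) + d + l := by
    have h1' : (1:ℝ) ≤ (d:ℝ) := by exact_mod_cast hd
    have h2' : (0:ℝ) ≤ (k:ℝ) := by positivity
    have h3' : (0:ℝ) ≤ (l:ℝ) := by positivity
    linarith
  have hsum : ∑ v, x v = ((k : ℝ) + d + l) * a := by
    rw [Finset.sum_congr rfl (fun v _ => hall v), Finset.sum_const, card_univ, nsmul_eq_mul]
    simp only [Fintype.card_sum, Fintype.card_fin]
    push_cast
    ring
  rw [hsum] at h0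
  have ha0 : a = 0 := by
    rcases mul_eq_zero.1 h0 with h' | h'
    · exact absurd h' hcard.ne'
    · exact h'
  rw [Finset.sum_congr rfl (fun v _ => by rw [hall v, ha0]), Finset.sum_const] at h1
  simp at h1

end Propagate


set_option maxHeartbeats 1000000 in
lemma algConn_Tkld_lt_one (k l d : ℕ) (hk : 1 ≤ k) (hl : 1 ≤ l) (hd : 2 ≤ d) :
    algConn (Tkld k l d) < 1 := by
  letI := Classical.decRel (Tkld k l d).Adj
  have hK1 : (1:ℝ) ≤ (k:ℝ) := by exact_mod_cast hk
  have hL1 : (1:ℝ) ≤ (l:ℝ) := by exact_mod_cast hl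
  have hN : (0:ℝ) < (k:ℝ) + l + 2 := by linarith
  set t : ℝ := (k:ℝ) * l / ((k:ℝ) + l + 2) with htdef
  have ht : t * ((k:ℝ) + l + 2) = (k:ℝ) * l := by rw [htdef]; field_simp
  have htpos : 0 < t := by rw [htdef]; positivity
  set z : Fin k ⊕ Fin d ⊕ Fin l → ℝ := Sum.elim (fun _ => (l:ℝ))
    (Sum.elim (fun i => if i.1 = 0 then t else if i.1 + 1 = d then -t else 0)
      (fun _ => -(k:ℝ))) with hzdef
  have hzP : ∀ i : Fin d, z (Sum.inr (Sum.inl i))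
      = if i.1 = 0 then t else if i.1 + 1 = d then -t else 0 := fun i => rfl
  have hz0 : z (Sum.inr (Sum.inl ⟨0, by omega⟩)) = t := by
    rw [hzP]; exact if_pos rfl
  have hzlast : z (Sum.inr (Sum.inl ⟨d - 1, by omega⟩)) = -t := by
    rw [hzP, if_neg (by omega : ¬ (d - 1 = 0)), if_pos (by omega : d - 1 + 1 = d)]
  have hkey : ∀ F : Fin d → ℝ, (∑ i : Fin d, z (Sum.inr (Sum.inl i)) * F i)
      = t * F ⟨0, by omega⟩ + (-t) * F ⟨d - 1, by omega⟩ := by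
    intro F
    have step : ∀ i : Fin d, z (Sum.inr (Sum.inl i)) * F i
        = (if i.1 = 0 then t * F i else 0) + (if i.1 + 1 = d then (-t) * F i else 0) := by
      intro i
      rw [hzP]
      by_cases h0 : i.1 = 0
      · rw [if_pos h0, if_pos h0, if_neg (by omega : ¬ (i.1 + 1 = d))]; ring
      · rw [if_neg h0, if_neg h0]
        by_cases h1 : i.1 + 1 = d
        · rw [if_pos h1, if_pos h1]; ring
        · rw [if_neg h1, if_neg h1]; ring
    rw [Finset.sum_congr rfl (fun i _ => step i), Finset.sum_add_distrib,
      sum_ite_fin (fun j => j = 0) _ 0 (fun j _ => Iff.rfl),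
      sum_ite_fin (fun j => j + 1 = d) _ (d - 1) (fun j hj => by omega),
      dif_pos (by omega : 0 < d), dif_pos (by omega : d - 1 < d)]
  have hkey1 : (∑ i : Fin d, z (Sum.inr (Sum.inl i))) = 0 := by
    calc (∑ i : Fin d, z (Sum.inr (Sum.inl i)))
        = ∑ i : Fin d, z (Sum.inr (Sum.inl i)) * (fun _ : Fin d => (1:ℝ)) i :=
          Finset.sum_congr rfl fun i _ => (mul_one _).symm
      _ = t * 1 + (-t) * 1 := hkey _
      _ = 0 := by ring
  have hzsum : ∑ v, z v = 0 := by
    rw [Fintype.sum_sum_type, Fintype.sum_sum_type, hkey1]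
    rw [show (∑ _u : Fin k, z (Sum.inl _u)) = ∑ _u : Fin k, (l:ℝ) from rfl,
      show (∑ _u : Fin l, z (Sum.inr (Sum.inr _u))) = ∑ _u : Fin l, -(k:ℝ) from rfl,
      Finset.sum_const, Finset.sum_const, card_univ, card_univ, Fintype.card_fin,
      Fintype.card_fin, nsmul_eq_mul, nsmul_eq_mul]
    ring
  have hzsq : (∑ v, (z v) ^ 2) = (k:ℝ) * (l:ℝ) ^ 2 + 2 * t ^ 2 + (l:ℝ) * (k:ℝ) ^ 2 := by
    rw [Fintype.sum_sum_type, Fintype.sum_sum_type]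
    have hmid : (∑ i : Fin d, (z (Sum.inr (Sum.inl i))) ^ 2) = 2 * t ^ 2 := by
      calc (∑ i : Fin d, (z (Sum.inr (Sum.inl i))) ^ 2)
          = ∑ i : Fin d, z (Sum.inr (Sum.inl i)) * z (Sum.inr (Sum.inl i)) :=
            Finset.sum_congr rfl fun i _ => pow_two _
        _ = t * z (Sum.inr (Sum.inl ⟨0, by omega⟩))
            + (-t) * z (Sum.inr (Sum.inl ⟨d - 1, by omega⟩)) := hkey _
        _ = 2 * t ^ 2 := by rw [hz0, hzlast]; ring
    rw [hmid]
    rw [show (∑ _u : Fin k, (z (Sum.inl _u)) ^ 2) = ∑ _u : Fin k, (l:ℝ) ^ 2 from rfl,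
      show (∑ _u : Fin l, (z (Sum.inr (Sum.inr _u))) ^ 2) = ∑ _u : Fin l, (-(k:ℝ)) ^ 2 from rfl,
      Finset.sum_const, Finset.sum_const, card_univ, card_univ, Fintype.card_fin,
      Fintype.card_fin, nsmul_eq_mul, nsmul_eq_mul]
    ring
  set Lap := (Tkld k l d).lapMatrix ℝ with hLap
  have hlapL : ∀ u : Fin k, (Lap *ᵥ z) (Sum.inl u) = (l:ℝ) - t := by
    intro u
    rw [hLap, lapT_left z (by omega) u, hz0]
    rfl
  have hlapR : ∀ u : Fin l, (Lap *ᵥ z) (Sum.inr (Sum.inr u)) = t - (k:ℝ) := by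
    intro u
    rw [hLap, lapT_right z (by omega) u, hzlast]
    show -(k:ℝ) - -t = t - (k:ℝ)
    ring
  have hlap0 : (Lap *ᵥ z) (Sum.inr (Sum.inl ⟨0, by omega⟩)) =
      (k:ℝ) * (t - (l:ℝ)) + (t - z (Sum.inr (Sum.inl ⟨1, by omega⟩))) := by
    rw [hLap, lapT_path z ⟨0, by omega⟩, dif_pos rfl, dif_neg (by omega : ¬ (0 + 1 = d))]
    have : (∑ u : Fin k, (z (Sum.inr (Sum.inl ⟨0, by omega⟩)) - z (Sum.inl u)))
        = ∑ _u : Fin k, (t - (l:ℝ)) := Finset.sum_congr rfl fun u _ => by rw [hz0]; rfl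
    rw [this, Finset.sum_const, card_univ, Fintype.card_fin, nsmul_eq_mul, hz0]
  have hlapdm1 : (Lap *ᵥ z) (Sum.inr (Sum.inl ⟨d - 1, by omega⟩)) =
      (-t - z (Sum.inr (Sum.inl ⟨d - 1 - 1, by omega⟩))) + (l:ℝ) * (-t + (k:ℝ)) := by
    rw [hLap, lapT_path z ⟨d - 1, by omega⟩, dif_neg (by omega : ¬ (d - 1 = 0)),
      dif_pos (by omega : d - 1 + 1 = d)]
    have : (∑ u : Fin l, (z (Sum.inr (Sum.inl ⟨d - 1, by omega⟩)) - z (Sum.inr (Sum.inr u))))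
        = ∑ _u : Fin l, (-t + (k:ℝ)) := Finset.sum_congr rfl fun u _ => by
          rw [hzlast, show z (Sum.inr (Sum.inr u)) = -(k:ℝ) from rfl]; ring
    rw [this, Finset.sum_const, card_univ, Fintype.card_fin, nsmul_eq_mul, hzlast]
  have hR : z ⬝ᵥ (Lap *ᵥ z) = (k:ℝ) * ((l:ℝ) * ((l:ℝ) - t)) + (l:ℝ) * ((-(k:ℝ)) * (t - (k:ℝ)))
      + (t * ((Lap *ᵥ z) (Sum.inr (Sum.inl ⟨0, by omega⟩)))
        + (-t) * ((Lap *ᵥ z) (Sum.inr (Sum.inl ⟨d - 1, by omega⟩)))) := by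
    show (∑ v, z v * (Lap *ᵥ z) v) = _
    rw [Fintype.sum_sum_type, Fintype.sum_sum_type]
    have e1 : (∑ u : Fin k, z (Sum.inl u) * (Lap *ᵥ z) (Sum.inl u))
        = ∑ _u : Fin k, (l:ℝ) * ((l:ℝ) - t) :=
      Finset.sum_congr rfl fun u _ => by rw [hlapL u]; rfl
    have e3 : (∑ u : Fin l, z (Sum.inr (Sum.inr u)) * (Lap *ᵥ z) (Sum.inr (Sum.inr u)))
        = ∑ _u : Fin l, (-(k:ℝ)) * (t - (k:ℝ)) :=
      Finset.sum_congr rfl fun u _ => by rw [hlapR u]; rfl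
    rw [e1, e3, hkey (fun i => (Lap *ᵥ z) (Sum.inr (Sum.inl i))),
      Finset.sum_const, Finset.sum_const, card_univ, card_univ, Fintype.card_fin,
      Fintype.card_fin, nsmul_eq_mul, nsmul_eq_mul]
    ring
  have hRS : z ⬝ᵥ (Lap *ᵥ z) < ∑ v, (z v) ^ 2 := by
    by_cases hd2 : d = 2
    · have hz1 : z (Sum.inr (Sum.inl ⟨1, by omega⟩)) = -t := by
        rw [hzP, if_neg (show ¬((1:ℕ) = 0) by omega), if_pos (show (1:ℕ) + 1 = d by omega)]
      have hz1' : z (Sum.inr (Sum.inl ⟨d - 1 - 1, by omega⟩)) = t := by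
        rw [hzP, if_pos (show d - 1 - 1 = 0 by omega)]
      rw [hR, hlap0, hlapdm1, hz1, hz1', hzsq]
      nlinarith [ht, htpos, hK1, hL1, mul_pos htpos htpos]
    · have hz1 : z (Sum.inr (Sum.inl ⟨1, by omega⟩)) = 0 := by
        rw [hzP, if_neg (show ¬((1:ℕ) = 0) by omega), if_neg (show ¬((1:ℕ) + 1 = d) by omega)]
      have hz1' : z (Sum.inr (Sum.inl ⟨d - 1 - 1, by omega⟩)) = 0 := by
        rw [hzP, if_neg (show ¬(d - 1 - 1 = 0) by omega), if_neg (show ¬(d - 1 - 1 + 1 = d) by omega)]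
      rw [hR, hlap0, hlapdm1, hz1, hz1', hzsq]
      nlinarith [ht, htpos, hK1, hL1, mul_pos htpos htpos]
  have hSpos : 0 < ∑ v, (z v) ^ 2 := by
    rw [hzsq]
    nlinarith [hK1, hL1, sq_nonneg t]
  have hle := algConn_le_rayleigh (Tkld k l d) z hzsum
  rw [← hLap] at hle
  have hfin : algConn (Tkld k l d) * (∑ v, (z v) ^ 2) < 1 * (∑ v, (z v) ^ 2) := by
    rw [one_mul]
    exact lt_of_le_of_lt hle hRS
  exact lt_of_mul_lt_mul_right hfin hSpos.le


lemma exists_x0 (k l d : ℕ) (hk : 1 ≤ k) (hd : 1 ≤ d) :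
    ∃ x₀ : Fin k ⊕ Fin d ⊕ Fin l → ℝ, (∑ v, x₀ v) = 0 ∧ (∑ v, (x₀ v) ^ 2) = 1 := by
  set s : ℝ := (Real.sqrt 2)⁻¹ with hs
  have hs2 : s ^ 2 = 1 / 2 := by
    rw [hs, inv_pow, Real.sq_sqrt (by norm_num : (2:ℝ) ≥ 0)]
    norm_num
  refine ⟨Sum.elim (fun i => if i.1 = 0 then s else 0)
    (Sum.elim (fun i => if i.1 = 0 then -s else 0) (fun _ => 0)), ?_, ?_⟩
  · rw [Fintype.sum_sum_type, Fintype.sum_sum_type]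
    rw [show (∑ u : Fin k, Sum.elim (fun i : Fin k => if i.1 = 0 then s else 0)
        (Sum.elim (fun i : Fin d => if i.1 = 0 then -s else 0) (fun _ : Fin l => (0:ℝ)))
        (Sum.inl u)) = ∑ u : Fin k, (if u.1 = 0 then s else 0) from rfl]
    rw [sum_ite_fin (fun j => j = 0) (fun _ => s) 0 (fun j _ => Iff.rfl), dif_pos (show 0 < k by omega)]
    rw [show (∑ u : Fin d, Sum.elim (fun i : Fin k => if i.1 = 0 then s else 0)
        (Sum.elim (fun i : Fin d => if i.1 = 0 then -s else 0) (fun _ : Fin l => (0:ℝ)))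
        (Sum.inr (Sum.inl u))) = ∑ u : Fin d, (if u.1 = 0 then -s else 0) from rfl]
    rw [sum_ite_fin (fun j => j = 0) (fun _ => -s) 0 (fun j _ => Iff.rfl), dif_pos (show 0 < d by omega)]
    simp
  · rw [Fintype.sum_sum_type, Fintype.sum_sum_type]
    rw [show (∑ u : Fin k, (Sum.elim (fun i : Fin k => if i.1 = 0 then s else 0)
        (Sum.elim (fun i : Fin d => if i.1 = 0 then -s else 0) (fun _ : Fin l => (0:ℝ)))
        (Sum.inl u)) ^ 2) = ∑ u : Fin k, (if u.1 = 0 then s ^ 2 else 0) from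
      Finset.sum_congr rfl fun u _ => by by_cases h : u.1 = 0 <;> simp [h]]
    rw [sum_ite_fin (fun j => j = 0) (fun _ => s ^ 2) 0 (fun j _ => Iff.rfl), dif_pos (show 0 < k by omega)]
    rw [show (∑ u : Fin d, (Sum.elim (fun i : Fin k => if i.1 = 0 then s else 0)
        (Sum.elim (fun i : Fin d => if i.1 = 0 then -s else 0) (fun _ : Fin l => (0:ℝ)))
        (Sum.inr (Sum.inl u))) ^ 2) = ∑ u : Fin d, (if u.1 = 0 then s ^ 2 else 0) from
      Finset.sum_congr rfl fun u _ => by by_cases h : u.1 = 0 <;> simp [h]]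
    rw [sum_ite_fin (fun j => j = 0) (fun _ => s ^ 2) 0 (fun j _ => Iff.rfl), dif_pos (show 0 < d by omega)]
    simp [hs2]
    norm_num

lemma algConn_Tkld_pos (k l d : ℕ) (hk : 1 ≤ k) (hd : 1 ≤ d) :
    0 < algConn (Tkld k l d) := by
  letI := Classical.decRel (Tkld k l d).Adj
  obtain ⟨x₀, hx00, hx01⟩ := exists_x0 k l d hk hd
  obtain ⟨x, h0, h1, hxR⟩ := exists_fiedler (Tkld k l d) x₀ hx00 hx01
  rcases lt_or_eq_of_le (quadform_nonneg (Tkld k l d) x) with h | h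
  · rwa [hxR] at h
  · exfalso
    have hzero : Matrix.toLinearMap₂' ℝ ((Tkld k l d).lapMatrix ℝ) x x = 0 := by
      rw [Matrix.toLinearMap₂'_apply', ← h]
    have hadj := (lapMatrix_toLinearMap₂'_apply'_eq_zero_iff_forall_adj (R := ℝ)
      (G := Tkld k l d) (x := x)).1 hzero
    exact const_contradiction hd (fun v w hvw => hadj v w hvw) h0 h1


set_option maxHeartbeats 2000000 in
/-- for `k ≥ 1`, `l ≥ 2`, `d ≥ 1`, `α(T(k,l,d)) > α(T(k,l−1,d+1))`. -/
theorem algConn_Tkld_gt_right (k l d : ℕ) (hk : 1 ≤ k) (hl : 2 ≤ l) (hd : 1 ≤ d) :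
    algConn (Tkld k l d) > algConn (Tkld k (l - 1) (d + 1)) := by
  have hG1 : algConn (Tkld k (l - 1) (d + 1)) < 1 :=
    algConn_Tkld_lt_one k (l - 1) (d + 1) hk (by omega) (by omega)
  by_cases hH1 : 1 ≤ algConn (Tkld k l d)
  · exact lt_of_lt_of_le hG1 hH1
  push_neg at hH1
  letI instH := Classical.decRel (Tkld k l d).Adj
  letI instG := Classical.decRel (Tkld k (l - 1) (d + 1)).Adj
  obtain ⟨x₀, hx00, hx01⟩ := exists_x0 k l d hk hd
  obtain ⟨x, h0, h1, hxR⟩ := exists_fiedler (Tkld k l d) x₀ hx00 hx01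
  have heig := fiedler_eig (Tkld k l d) x h0 h1 hxR
  set lam := algConn (Tkld k l d) with hlam
  have hlampos : 0 < lam := algConn_Tkld_pos k l d hk hd
  have hlamne1 : lam ≠ 1 := ne_of_lt hH1
  have h1mlam : (0:ℝ) < 1 - lam := by linarith
  have heq : ∀ v, ((Tkld k l d).lapMatrix ℝ *ᵥ x) v = lam * x v := fun v => by
    rw [heig]; rfl
  have hdd : 0 < d := hd
  obtain ⟨c, hpd⟩ : ∃ c : ℝ, x (Sum.inr (Sum.inl ⟨d - 1, by omega⟩)) = (1 - lam) * c :=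
    ⟨x (Sum.inr (Sum.inl ⟨d - 1, by omega⟩)) / (1 - lam), by field_simp⟩
  have hpend : ∀ u : Fin l, x (Sum.inr (Sum.inr u)) = c := by
    intro u
    have h := heq (Sum.inr (Sum.inr u))
    rw [lapT_right x hdd u, hpd] at h
    have h2 : (1 - lam) * x (Sum.inr (Sum.inr u)) = (1 - lam) * c := by linear_combination h
    exact mul_left_cancel₀ (by linarith) h2
  have hcne : c ≠ 0 := by
    intro hc0
    have hx0 : x (Sum.inr (Sum.inl ⟨d - 1, by omega⟩)) = 0 := by rw [hpd, hc0, mul_zero]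
    have hall := zero_propagate hdd heig hlamne1 hx0
    have hzero : (∑ v, (x v) ^ 2) = 0 := Finset.sum_eq_zero fun v _ => by rw [hall v]; ring
    rw [h1] at hzero
    norm_num at hzero
  -- decompose the H-side constraints
  have hlcast : ((l - 1 : ℕ) : ℝ) = (l : ℝ) - 1 := by
    rw [Nat.cast_sub (by omega)]; norm_num
  have hH0 : (∑ u : Fin k, x (Sum.inl u)) + ((∑ i : Fin d, x (Sum.inr (Sum.inl i)))
      + (l : ℝ) * c) = 0 := by
    rw [← h0, Fintype.sum_sum_type, Fintype.sum_sum_type]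
    congr 1
    congr 1
    rw [Finset.sum_congr rfl (fun (u : Fin l) _ => hpend u), Finset.sum_const, card_univ,
      Fintype.card_fin, nsmul_eq_mul]
  have hH1' : (∑ u : Fin k, (x (Sum.inl u)) ^ 2) + ((∑ i : Fin d, (x (Sum.inr (Sum.inl i))) ^ 2)
      + (l : ℝ) * c ^ 2) = 1 := by
    rw [← h1, Fintype.sum_sum_type, Fintype.sum_sum_type]
    congr 1
    congr 1
    rw [Finset.sum_congr rfl (fun (u : Fin l) _ => by rw [hpend u]), Finset.sum_const,
      card_univ, Fintype.card_fin, nsmul_eq_mul]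
  -- define the test vector on G
  set y : Fin k ⊕ Fin (d + 1) ⊕ Fin (l - 1) → ℝ := Sum.elim (fun i => x (Sum.inl i))
    (Sum.elim (fun i => if h : i.1 < d then x (Sum.inr (Sum.inl ⟨i.1, h⟩)) else c)
      (fun _ => c)) with hydef
  have hyL : ∀ u : Fin k, y (Sum.inl u) = x (Sum.inl u) := fun u => rfl
  have hyRv : ∀ u : Fin (l - 1), y (Sum.inr (Sum.inr u)) = c := fun u => rfl
  have hycast : ∀ i : Fin d, y (Sum.inr (Sum.inl (Fin.castSucc i))) = x (Sum.inr (Sum.inl i)) := by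
    intro i
    show (if h : (Fin.castSucc i).1 < d then x (Sum.inr (Sum.inl ⟨(Fin.castSucc i).1, h⟩))
      else c) = _
    rw [dif_pos (show (Fin.castSucc i).1 < d from by simpa using i.2)]
    exact xeq x (by simpa using i.2) i.2 (by simp)
  have hyq : ∀ (i : Fin (d + 1)) (h : i.1 < d),
      y (Sum.inr (Sum.inl i)) = x (Sum.inr (Sum.inl ⟨i.1, h⟩)) := by
    intro i h
    show (if h' : i.1 < d then x (Sum.inr (Sum.inl ⟨i.1, h'⟩)) else c) = _
    rw [dif_pos h]
  have hytop : ∀ (i : Fin (d + 1)), ¬ (i.1 < d) → y (Sum.inr (Sum.inl i)) = c := by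
    intro i h
    show (if h' : i.1 < d then x (Sum.inr (Sum.inl ⟨i.1, h'⟩)) else c) = c
    rw [dif_neg h]
  -- sum of y is zero
  have hy0 : ∑ v, y v = 0 := by
    rw [Fintype.sum_sum_type, Fintype.sum_sum_type, Fin.sum_univ_castSucc]
    rw [Finset.sum_congr rfl (fun (i : Fin d) _ => hycast i),
      hytop (Fin.last d) (by simp),
      Finset.sum_congr rfl (fun (u : Fin (l-1)) _ => hyRv u), Finset.sum_const, card_univ,
      Fintype.card_fin, nsmul_eq_mul, hlcast]
    rw [Finset.sum_congr rfl (fun (u : Fin k) _ => hyL u)]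
    linarith [hH0]
  -- sum of squares of y is one
  have hy1 : (∑ v, (y v) ^ 2) = 1 := by
    rw [Fintype.sum_sum_type, Fintype.sum_sum_type, Fin.sum_univ_castSucc]
    rw [Finset.sum_congr rfl (fun (i : Fin d) _ => by rw [hycast i]),
      hytop (Fin.last d) (by simp),
      Finset.sum_congr rfl (fun (u : Fin (l-1)) _ => by rw [hyRv u]), Finset.sum_const, card_univ,
      Fintype.card_fin, nsmul_eq_mul, hlcast]
    rw [Finset.sum_congr rfl (fun (u : Fin k) _ => by rw [hyL u])]
    linarith [hH1']
  -- Laplacian of G applied to y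
  have hgL : ∀ u : Fin k, ((Tkld k (l - 1) (d + 1)).lapMatrix ℝ *ᵥ y) (Sum.inl u)
      = lam * x (Sum.inl u) := by
    intro u
    rw [lapT_left y (by omega) u, hyq ⟨0, by omega⟩ (by omega : (0:ℕ) < d)]
    have h := heq (Sum.inl u)
    rw [lapT_left x hdd u] at h
    rw [hyL u, ← h]
  have hgR : ∀ u : Fin (l - 1), ((Tkld k (l - 1) (d + 1)).lapMatrix ℝ *ᵥ y)
      (Sum.inr (Sum.inr u)) = 0 := by
    intro u
    rw [lapT_right y (by omega) u, hyRv u, hytop ⟨d + 1 - 1, by omega⟩ (by omega : ¬ (d + 1 - 1 < d))]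
    ring
  have hlastval : (Fin.last d).1 = d := rfl
  have hglast : ((Tkld k (l - 1) (d + 1)).lapMatrix ℝ *ᵥ y) (Sum.inr (Sum.inl (Fin.last d)))
      = lam * c := by
    rw [lapT_path y (Fin.last d)]
    simp only [Fin.val_last]
    rw [dif_neg (show ¬ (d = 0) by omega), dif_pos trivial]
    have e3 : (∑ u : Fin (l - 1), (y (Sum.inr (Sum.inl (Fin.last d))) - y (Sum.inr (Sum.inr u))))
        = 0 := Finset.sum_eq_zero fun u _ => by
      rw [hytop (Fin.last d) (show ¬ (d < d) by omega), hyRv u]; ring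
    have e1 : y (Sum.inr (Sum.inl (Fin.last d))) = c := hytop _ (show ¬ (d < d) by omega)
    have e2 : y (Sum.inr (Sum.inl ⟨d - 1, by omega⟩)) = (1 - lam) * c := by
      rw [hyq _ (show d - 1 < d by omega)]
      exact (xeq x _ (by omega : d - 1 < d) rfl).trans hpd
    rw [e3, e1, e2]
    ring
  have hgP : ∀ i : Fin d, ((Tkld k (l - 1) (d + 1)).lapMatrix ℝ *ᵥ y)
      (Sum.inr (Sum.inl (Fin.castSucc i)))
      = lam * x (Sum.inr (Sum.inl i)) + (if i.1 + 1 = d then ((l:ℝ) - 1) * (lam * c) else 0) := by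
    intro i
    have h := heq (Sum.inr (Sum.inl i))
    rw [lapT_path x i] at h
    rw [lapT_path y (Fin.castSucc i)]
    simp only [Fin.coe_castSucc]
    rw [dif_neg (show ¬ (i.1 + 1 = d + 1) by omega)]
    have ey : y (Sum.inr (Sum.inl (Fin.castSucc i))) = x (Sum.inr (Sum.inl i)) := hycast i
    have hpendsum : (∑ u : Fin l, (x (Sum.inr (Sum.inl i)) - x (Sum.inr (Sum.inr u))))
        = (l:ℝ) * (x (Sum.inr (Sum.inl i)) - c) := by
      calc (∑ u : Fin l, (x (Sum.inr (Sum.inl i)) - x (Sum.inr (Sum.inr u))))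
          = ∑ _u : Fin l, (x (Sum.inr (Sum.inl i)) - c) :=
            Finset.sum_congr rfl fun u _ => by rw [hpend u]
        _ = (l:ℝ) * (x (Sum.inr (Sum.inl i)) - c) := by
            rw [Finset.sum_const, card_univ, Fintype.card_fin, nsmul_eq_mul]
    by_cases h0 : i.1 = 0
    · rw [dif_pos h0] at h
      rw [dif_pos h0]
      have eL : (∑ u : Fin k, (y (Sum.inr (Sum.inl (Fin.castSucc i))) - y (Sum.inl u)))
          = ∑ u : Fin k, (x (Sum.inr (Sum.inl i)) - x (Sum.inl u)) :=
        Finset.sum_congr rfl fun u _ => by rw [ey]; rfl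
      rw [eL]
      by_cases h1 : i.1 + 1 = d
      · rw [dif_pos h1, hpendsum] at h
        have etop : y (Sum.inr (Sum.inl ⟨i.1 + 1, by omega⟩)) = c :=
          hytop _ (show ¬ (i.1 + 1 < d) by omega)
        rw [if_pos h1, ey, etop]
        have hxi : x (Sum.inr (Sum.inl i)) = (1 - lam) * c :=
          (xeq x i.2 (by omega) (by omega)).trans hpd
        rw [hxi] at h ⊢
        linear_combination h
      · rw [dif_neg h1] at h
        have enext : y (Sum.inr (Sum.inl ⟨i.1 + 1, by omega⟩))
            = x (Sum.inr (Sum.inl ⟨i.1 + 1, by omega⟩)) := by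
          rw [hyq _ (show i.1 + 1 < d by omega)]
        rw [if_neg h1, ey, enext]
        linear_combination h
    · rw [dif_neg h0] at h
      rw [dif_neg h0]
      have eprev : y (Sum.inr (Sum.inl ⟨i.1 - 1, by omega⟩))
          = x (Sum.inr (Sum.inl ⟨i.1 - 1, by omega⟩)) := by
        rw [hyq _ (show i.1 - 1 < d by omega)]
      by_cases h1 : i.1 + 1 = d
      · rw [dif_pos h1, hpendsum] at h
        have etop : y (Sum.inr (Sum.inl ⟨i.1 + 1, by omega⟩)) = c :=
          hytop _ (show ¬ (i.1 + 1 < d) by omega)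
        rw [if_pos h1, ey, etop, eprev]
        have hxi : x (Sum.inr (Sum.inl i)) = (1 - lam) * c :=
          (xeq x i.2 (by omega) (by omega)).trans hpd
        rw [hxi] at h ⊢
        linear_combination h
      · rw [dif_neg h1] at h
        have enext : y (Sum.inr (Sum.inl ⟨i.1 + 1, by omega⟩))
            = x (Sum.inr (Sum.inl ⟨i.1 + 1, by omega⟩)) := by
          rw [hyq _ (show i.1 + 1 < d by omega)]
        rw [if_neg h1, ey, enext, eprev]
        linear_combination h
  -- the Rayleigh quotient of y
  have hyRay : y ⬝ᵥ ((Tkld k (l - 1) (d + 1)).lapMatrix ℝ *ᵥ y)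
      = lam - ((l:ℝ) - 1) * lam ^ 2 * c ^ 2 := by
    show (∑ v, y v * ((Tkld k (l - 1) (d + 1)).lapMatrix ℝ *ᵥ y) v) = _
    rw [Fintype.sum_sum_type, Fintype.sum_sum_type, Fin.sum_univ_castSucc]
    have edot : (∑ u : Fin k, y (Sum.inl u) * ((Tkld k (l - 1) (d + 1)).lapMatrix ℝ *ᵥ y)
        (Sum.inl u)) = lam * (∑ u : Fin k, (x (Sum.inl u)) ^ 2) := by
      rw [Finset.mul_sum]
      exact Finset.sum_congr rfl fun u _ => by rw [hyL u, hgL u]; ring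
    have edR : (∑ u : Fin (l - 1), y (Sum.inr (Sum.inr u)) * ((Tkld k (l - 1) (d + 1)).lapMatrix ℝ
        *ᵥ y) (Sum.inr (Sum.inr u))) = 0 :=
      Finset.sum_eq_zero fun u _ => by rw [hgR u, mul_zero]
    have elast : y (Sum.inr (Sum.inl (Fin.last d)))
        * ((Tkld k (l - 1) (d + 1)).lapMatrix ℝ *ᵥ y) (Sum.inr (Sum.inl (Fin.last d)))
        = c * (lam * c) := by
      rw [hglast, hytop (Fin.last d) (by rw [hlastval]; omega)]
    have hmid : (∑ i : Fin d, y (Sum.inr (Sum.inl (Fin.castSucc i)))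
        * ((Tkld k (l - 1) (d + 1)).lapMatrix ℝ *ᵥ y) (Sum.inr (Sum.inl (Fin.castSucc i))))
        = lam * (∑ i : Fin d, (x (Sum.inr (Sum.inl i))) ^ 2)
          + (1 - lam) * c * (((l:ℝ) - 1) * (lam * c)) := by
      have step : ∀ i : Fin d, y (Sum.inr (Sum.inl (Fin.castSucc i)))
          * ((Tkld k (l - 1) (d + 1)).lapMatrix ℝ *ᵥ y) (Sum.inr (Sum.inl (Fin.castSucc i)))
          = lam * (x (Sum.inr (Sum.inl i))) ^ 2
            + (if i.1 + 1 = d then x (Sum.inr (Sum.inl i)) * (((l:ℝ) - 1) * (lam * c))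
              else 0) := by
        intro i
        rw [hycast i, hgP i]
        by_cases h1 : i.1 + 1 = d
        · rw [if_pos h1, if_pos h1]; ring
        · rw [if_neg h1, if_neg h1]; ring
      rw [Finset.sum_congr rfl (fun i _ => step i), Finset.sum_add_distrib, ← Finset.mul_sum,
        sum_ite_fin (fun j => j + 1 = d) _ (d - 1) (fun j hj => by omega),
        dif_pos (show d - 1 < d by omega), hpd]
    rw [edot, edR, elast, hmid]
    linear_combination lam * hH1'
  -- conclude
  have hle := algConn_le_rayleigh (Tkld k (l - 1) (d + 1)) y hy0
  rw [hy1, mul_one, hyRay] at hle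
  have hlpos : (0:ℝ) < (l:ℝ) - 1 := by
    have h2l : (2:ℝ) ≤ (l:ℝ) := by exact_mod_cast hl
    linarith
  have hcsq : (0:ℝ) < c ^ 2 := lt_of_le_of_ne (sq_nonneg c) (Ne.symm (pow_ne_zero 2 hcne))
  have hgain : 0 < ((l:ℝ) - 1) * lam ^ 2 * c ^ 2 :=
    mul_pos (mul_pos hlpos (pow_pos hlampos 2)) hcsq
  linarith
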